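/- Let f, g, h, k be complex numbers with g ≠ 0, f^2 + 4*g ≠ 0 and g*h^2 - k^2 + f*h*k ≠ 0, and let R : ℕ → ℂ satisfy R 0 = h, R 1 = k, R (n+2) = f * R (n+1) + g * R n. Let d = g*h^2 - k^2 + f*h*k, B = !![0, g; 1, f], and M = (1/d) • !![g*h^2 + f^2*h^2 + k^2 - 2*f*h*k, g*h*(2*k - f*h); h*(2*k - f*h), g*h^2 + k^2]. Then for all n, (R n)^2 = ((-g)^n * d / (f^2 + 4*g)) * Matrix.det (M + (-g)^n • (B⁻¹)^(2*n)). -/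

import Mathlib

def luc (f g : ℂ) : ℕ → ℂ
  | 0 => 0
  | 1 => 1
  | (n+2) => f * luc f g (n+1) + g * luc f g n

lemma luc_rec (f g : ℂ) (n : ℕ) :
    luc f g (n+2) = f * luc f g (n+1) + g * luc f g n := rfl

lemma luc_det (f g : ℂ) : ∀ n : ℕ,
    luc f g (n+1)^2 - f * luc f g n * luc f g (n+1) - g * luc f g n^2 = (-g)^n := by
  intro n
  induction n with
  | zero => simp [luc]
  | succ n ih =>
    have r := luc_rec f g n
    rw [show n+1+1 = n+2 by omega, r, pow_succ]
    linear_combination (-g) * ih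

lemma luc_triple (f g : ℂ) : ∀ n : ℕ,
    (f^2+4*g) * luc f g n^2 = 2*luc f g (2*n+1) - f*luc f g (2*n) - 2*(-g)^n ∧
    (f^2+4*g) * (luc f g n * luc f g (n+1)) = f*luc f g (2*n+1) + 2*g*luc f g (2*n) - f*(-g)^n ∧
    (f^2+4*g) * luc f g (n+1)^2 = 2*luc f g (2*n+3) - f*luc f g (2*n+2) + 2*g*(-g)^n := by
  intro n
  induction n with
  | zero =>
    refine ⟨?_, ?_, ?_⟩ <;> simp [luc] <;> ring
  | succ n ih =>
    obtain ⟨i1, i2, i3⟩ := ih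
    have r0 : luc f g (n+2) = f * luc f g (n+1) + g * luc f g n := luc_rec f g n
    have r1 : luc f g (2*n+2) = f * luc f g (2*n+1) + g * luc f g (2*n) := luc_rec f g (2*n)
    have r2 : luc f g (2*n+3) = f * luc f g (2*n+2) + g * luc f g (2*n+1) := luc_rec f g (2*n+1)
    have r3 : luc f g (2*n+4) = f * luc f g (2*n+3) + g * luc f g (2*n+2) := luc_rec f g (2*n+2)
    have r4 : luc f g (2*n+5) = f * luc f g (2*n+4) + g * luc f g (2*n+3) := luc_rec f g (2*n+3)
    rw [r2, r1] at i3
    simp only [show n+1+1 = n+2 by omega, show 2*(n+1) = 2*n+2 by omega,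
      show 2*n+2+1 = 2*n+3 by omega, show 2*n+2+2 = 2*n+4 by omega,
      show 2*n+2+3 = 2*n+5 by omega, pow_succ]
    rw [r4, r3, r2, r1, r0]
    refine ⟨?_, ?_, ?_⟩
    · linear_combination i3
    · linear_combination f*i3 + g*i2
    · linear_combination f^2*i3 + 2*f*g*i2 + g^2*i1

lemma R_formula (f g h k : ℂ) (R : ℕ → ℂ) (h0 : R 0 = h) (h1 : R 1 = k)
    (hrec : ∀ n, R (n + 2) = f * R (n + 1) + g * R n) :
    ∀ n, R n = h*(luc f g (n+1) - f*luc f g n) + k*luc f g n := by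
  have key : ∀ n, R n = h*(luc f g (n+1) - f*luc f g n) + k*luc f g n ∧
      R (n+1) = h*(luc f g (n+2) - f*luc f g (n+1)) + k*luc f g (n+1) := by
    intro n
    induction n with
    | zero => refine ⟨?_, ?_⟩ <;> simp [luc, h0, h1] <;> ring
    | succ n ih =>
      obtain ⟨ih1, ih2⟩ := ih
      refine ⟨ih2, ?_⟩
      rw [show n+1+2 = n+3 by omega, show n+1+1 = n+2 by omega] at *
      have r1 : luc f g (n+3) = f * luc f g (n+2) + g * luc f g (n+1) := luc_rec f g (n+1)
      have r2 : luc f g (n+4) = f * luc f g (n+3) + g * luc f g (n+2) := luc_rec f g (n+2)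
      rw [hrec n, ih1, ih2, r1, luc_rec f g n]
      ring
  exact fun n => (key n).1

lemma Binv_pow (f g : ℂ) (hg : g ≠ 0) : ∀ n : ℕ,
    ((!![0, g; 1, f] : Matrix (Fin 2) (Fin 2) ℂ)⁻¹)^(2*n) =
      (g^(2*n))⁻¹ • !![luc f g (2*n+1), -g*luc f g (2*n);
                       -(luc f g (2*n)), luc f g (2*n+1) - f*luc f g (2*n)] := by
  have hBi : (!![0, g; 1, f] : Matrix (Fin 2) (Fin 2) ℂ)⁻¹ = !![-(f/g), 1; 1/g, 0] := by
    apply Matrix.inv_eq_right_inv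
    rw [Matrix.mul_fin_two, Matrix.one_fin_two]
    congr 1 <;> field_simp <;> simp [hg]
  intro n
  induction n with
  | zero => simp [luc, Matrix.one_fin_two]
  | succ n ih =>
    have hgp : (g:ℂ)^(2*n) ≠ 0 := pow_ne_zero _ hg
    have r1 : luc f g (2*n+2) = f * luc f g (2*n+1) + g * luc f g (2*n) := luc_rec f g (2*n)
    have r2 : luc f g (2*n+3) = f * luc f g (2*n+2) + g * luc f g (2*n+1) := luc_rec f g (2*n+1)
    rw [show 2*(n+1) = 2*n+2 by omega, pow_add, ih, hBi,
      show (!![-(f/g), 1; 1/g, 0] : Matrix (Fin 2) (Fin 2) ℂ)^2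
        = !![-(f/g), 1; 1/g, 0] * !![-(f/g), 1; 1/g, 0] from sq _,
      Matrix.mul_fin_two, Matrix.smul_mul, Matrix.mul_fin_two,
      show 2*n+2+1 = 2*n+3 by omega, r2, r1,
      show (g:ℂ)^(2*n+2) = g^(2*n) * g^2 by ring, mul_inv, mul_smul]
    congr 1
    ext i j
    fin_cases i <;> fin_cases j <;>
      · simp [Matrix.smul_apply]
        field_simp
        ring

set_option maxHeartbeats 2000000 in
theorem stmt_18 (f g h k : ℂ) (hg : g ≠ 0) (hfg : f^2 + 4*g ≠ 0)
    (hd : g*h^2 - k^2 + f*h*k ≠ 0) (R : ℕ → ℂ)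
    (h0 : R 0 = h) (h1 : R 1 = k)
    (hrec : ∀ n, R (n + 2) = f * R (n + 1) + g * R n) :
    ∀ n : ℕ,
      (R n)^2 = ((-g)^n * (g*h^2 - k^2 + f*h*k) / (f^2 + 4*g)) * Matrix.det
        ((1/(g*h^2 - k^2 + f*h*k)) •
            (!![g*h^2 + f^2*h^2 + k^2 - 2*f*h*k, g*h*(2*k - f*h);
                h*(2*k - f*h), g*h^2 + k^2] : Matrix (Fin 2) (Fin 2) ℂ)
          + (-g)^n • ((!![0, g; 1, f] : Matrix (Fin 2) (Fin 2) ℂ)⁻¹)^(2*n)) := by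
  intro n
  have hX : ((-g):ℂ)^n ≠ 0 := pow_ne_zero _ (neg_ne_zero.mpr hg)
  have hgn : ((-g):ℂ)^n * (-g)^n = g^(2*n) := by
    rw [← mul_pow, pow_mul]; congr 1; ring
  obtain ⟨t1, t2, t3⟩ := luc_triple f g n
  have r1 : luc f g (2*n+2) = f * luc f g (2*n+1) + g * luc f g (2*n) := luc_rec f g (2*n)
  have r2 : luc f g (2*n+3) = f * luc f g (2*n+2) + g * luc f g (2*n+1) := luc_rec f g (2*n+1)
  rw [r2, r1] at t3
  have hRn := R_formula f g h k R h0 h1 hrec n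
  have hA : (f^2+4*g) * (R n)^2 =
      (f^2*h^2+2*g*h^2-2*f*h*k+2*k^2) * luc f g (2*n+1)
      + (-3*f*g*h^2+4*g*h*k - f*k^2 + 2*f^2*h*k - f^3*h^2) * luc f g (2*n)
      + 2*(g*h^2 - k^2 + f*h*k)*(-g)^n := by
    rw [hRn]
    linear_combination h^2*t3 + (2*h*k-2*f*h^2)*t2 + (k^2-2*f*h*k+f^2*h^2)*t1
  have hdet2 : luc f g (2*n+1)^2 - f * luc f g (2*n) * luc f g (2*n+1)
      - g * luc f g (2*n)^2 = (-g)^n * (-g)^n := by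
    have hld := luc_det f g (2*n)
    rw [show ((-g):ℂ)^(2*n) = (-g)^n*(-g)^n by rw [two_mul, pow_add]] at hld
    exact hld
  have hR2 : (R n)^2 =
      ((f^2*h^2+2*g*h^2-2*f*h*k+2*k^2) * luc f g (2*n+1)
      + (-3*f*g*h^2+4*g*h*k - f*k^2 + 2*f^2*h*k - f^3*h^2) * luc f g (2*n)
      + 2*(g*h^2 - k^2 + f*h*k)*(-g)^n) / (f^2+4*g) := by
    rw [eq_div_iff hfg]
    linear_combination hA
  rw [Binv_pow f g hg n, ← hgn, hR2, Matrix.det_fin_two]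
  simp only [Matrix.add_apply, Matrix.smul_apply, Matrix.cons_val', Matrix.cons_val_zero,
    Matrix.cons_val_one, Matrix.head_cons, Matrix.empty_val', Matrix.cons_val_fin_one,
    Matrix.head_fin_const, smul_eq_mul, Matrix.of_apply]
  have hd'' : h^2*g - k^2 + f*h*k ≠ 0 := by
    intro e; apply hd; linear_combination e
  field_simp
  congr 1
  linear_combination (-(g*h^2 - k^2 + f*h*k)^2) * hdet2
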